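/- Let n ≥ 4. The map i : D_0 → D(n) defined by i(O) = O, i(A_{11}) = a_{11}, i(A_{12}) = a_{12}, i(A_{21}) = a_{21}, i(A_{22}) = a_{22}, i(A_{33}) = a_{n−1,n−1}, i(A_{34}) = a_{n−1,n}, i(A_{43}) = a_{n,n−1}, i(A_{44}) = a_{nn} is an injective SupBotHom of B-modules, and it is a splittable injection: there exists a SupBotHom j : D(n) → D_0 with j ∘ i = id on D_0. -/

import Mathlib

open scoped Classical

def Sset (n : ℕ) : Set (ℕ × ℕ) :=
  {p | 1 ≤ p.1 ∧ p.1 ≤ n ∧ 1 ≤ p.2 ∧ p.2 ≤ n ∧ p.1 ≤ p.2 + 1 ∧ p.2 ≤ p.1 + 2}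

/-- `S(n)` as a sublattice of `ℕ × ℕ` (componentwise max and min). -/
def SL (n : ℕ) : Sublattice (ℕ × ℕ) where
  carrier := Sset n
  supClosed' := by
    rintro ⟨i, k⟩ h1 ⟨l, m⟩ h2
    simp only [Sset, Set.mem_setOf_eq, Prod.sup_def] at h1 h2 ⊢
    omega
  infClosed' := by
    rintro ⟨i, k⟩ h1 ⟨l, m⟩ h2
    simp only [Sset, Set.mem_setOf_eq, Prod.inf_def] at h1 h2 ⊢
    omega

/-- `D(n) = WithBot S(n)`: `S(n)` with a bottom element `O` adjoined. -/
abbrev Dn (n : ℕ) : Type := WithBot ↥(SL n)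


/-- The element `a_{ik}` of `D(n)` (junk value `⊥` if `(i,k) ∉ S(n)`). -/
noncomputable def aElt (n i k : ℕ) : Dn n :=
  if h : (i, k) ∈ SL n then (↑(⟨(i, k), h⟩ : ↥(SL n)) : Dn n) else ⊥

/-- The 8-element sublattice of `ℕ × ℕ` underlying `D_0`. -/
def SL0 : Sublattice (ℕ × ℕ) where
  carrier := {(1,1),(1,2),(2,1),(2,2),(3,3),(3,4),(4,3),(4,4)}
  supClosed' := by
    intro a ha b hb
    simp only [Set.mem_insert_iff, Set.mem_singleton_iff] at *
    rcases ha with rfl|rfl|rfl|rfl|rfl|rfl|rfl|rfl <;>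
      rcases hb with rfl|rfl|rfl|rfl|rfl|rfl|rfl|rfl <;> decide
  infClosed' := by
    intro a ha b hb
    simp only [Set.mem_insert_iff, Set.mem_singleton_iff] at *
    rcases ha with rfl|rfl|rfl|rfl|rfl|rfl|rfl|rfl <;>
      rcases hb with rfl|rfl|rfl|rfl|rfl|rfl|rfl|rfl <;> decide

/-- The 9-element B-module `D_0` (with bottom element `O` adjoined). -/
abbrev D0 : Type := WithBot ↥SL0

/-- The element `A_{ik}` of `D_0` (junk value `⊥` if `(i,k)` is not in the lattice). -/
noncomputable def A0 (i k : ℕ) : D0 :=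
  if h : (i, k) ∈ SL0 then (↑(⟨(i, k), h⟩ : ↥SL0) : D0) else ⊥

/-- For `n ≥ 4`, the map `i : D_0 → D(n)` sending `O ↦ O`, `A_{11},A_{12},A_{21},A_{22}`
to `a_{11},a_{12},a_{21},a_{22}` and `A_{33},A_{34},A_{43},A_{44}` to
`a_{n−1,n−1},a_{n−1,n},a_{n,n−1},a_{nn}` is an injective `SupBotHom` of B-modules, and
it is splittable: some `SupBotHom` `j : D(n) → D_0` satisfies `j ∘ i = id`. -/

def eF (n m : ℕ) : ℕ := if m ≤ 2 then m else if m = 3 then n - 1 else n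

def gF (n m : ℕ) : ℕ := if m = n then 4 else if m + 1 = n then 3 else if 2 ≤ m then 2 else m

def phiF (n : ℕ) (p : ℕ × ℕ) : ℕ × ℕ :=
  if gF n p.1 ≤ 2 ∧ gF n p.2 ≤ 2 then (gF n p.1, gF n p.2)
  else (max (gF n p.1) 3, max (gF n p.2) 3)

lemma sl0_cases {p : ℕ × ℕ} (hp : p ∈ SL0) :
    p = (1,1) ∨ p = (1,2) ∨ p = (2,1) ∨ p = (2,2) ∨ p = (3,3) ∨ p = (3,4) ∨ p = (4,3) ∨ p = (4,4) := by
  have hp' : p ∈ ({(1,1),(1,2),(2,1),(2,2),(3,3),(3,4),(4,3),(4,4)} : Set (ℕ×ℕ)) := hp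
  simpa only [Set.mem_insert_iff, Set.mem_singleton_iff] using hp'

lemma mem_sl0 {p : ℕ × ℕ}
    (h : p = (1,1) ∨ p = (1,2) ∨ p = (2,1) ∨ p = (2,2) ∨ p = (3,3) ∨ p = (3,4) ∨ p = (4,3) ∨ p = (4,4)) :
    p ∈ SL0 := by
  show p ∈ ({(1,1),(1,2),(2,1),(2,2),(3,3),(3,4),(4,3),(4,4)} : Set (ℕ×ℕ))
  simpa only [Set.mem_insert_iff, Set.mem_singleton_iff] using h

lemma fmem (n : ℕ) (hn : 4 ≤ n) (p : ↥SL0) : (eF n p.1.1, eF n p.1.2) ∈ SL n := by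
  obtain ⟨⟨a,b⟩, hp⟩ := p
  show _ ∈ Sset n
  simp only [Sset, Set.mem_setOf_eq, eF]
  rcases sl0_cases hp with h|h|h|h|h|h|h|h <;>
    (obtain ⟨rfl, rfl⟩ := Prod.mk.injEq .. ▸ h) <;> norm_num <;> omega

lemma gmax (n a b : ℕ) (ha : a ≤ n) (hb : b ≤ n) :
    gF n (max a b) = max (gF n a) (gF n b) := by
  simp only [gF]; split_ifs <;> omega

lemma gbounds (n a : ℕ) (h1 : 1 ≤ a) : 1 ≤ gF n a ∧ gF n a ≤ 4 := by
  simp only [gF]; split_ifs <;> omega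

lemma phimem (n : ℕ) {p : ℕ × ℕ} (hp : p ∈ SL n) : phiF n p ∈ SL0 := by
  have hp' : p ∈ Sset n := hp
  simp only [Sset, Set.mem_setOf_eq] at hp'
  have h1 := gbounds n p.1 hp'.1
  have h2 := gbounds n p.2 hp'.2.2.1
  apply mem_sl0
  simp only [phiF, Prod.mk.injEq]
  split_ifs with h <;> simp only [Prod.mk.injEq] <;> omega

lemma phisup (n : ℕ) (p q : ℕ × ℕ) (h1 : p.1 ≤ n) (h2 : p.2 ≤ n) (h3 : q.1 ≤ n)
    (h4 : q.2 ≤ n) : phiF n (p ⊔ q) = phiF n p ⊔ phiF n q := by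
  simp only [Prod.sup_def, phiF, gmax n _ _ h1 h3, gmax n _ _ h2 h4]
  split_ifs <;> simp only [Prod.mk.injEq, Prod.sup_def] <;> omega

lemma emax (n : ℕ) (hn : 4 ≤ n) {a b : ℕ} (ha : 1 ≤ a ∧ a ≤ 4) (hb : 1 ≤ b ∧ b ≤ 4) :
    eF n (max a b) = max (eF n a) (eF n b) := by
  simp only [eF]; split_ifs <;> omega

lemma sl0_bounds {p : ℕ × ℕ} (hp : p ∈ SL0) :
    (1 ≤ p.1 ∧ p.1 ≤ 4) ∧ (1 ≤ p.2 ∧ p.2 ≤ 4) := by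
  rcases sl0_cases hp with h|h|h|h|h|h|h|h <;> subst h <;> simp

lemma phi_eF (n : ℕ) (hn : 4 ≤ n) {p : ℕ × ℕ} (hp : p ∈ SL0) :
    phiF n (eF n p.1, eF n p.2) = p := by
  have g1 : gF n 1 = 1 := by simp only [gF]; split_ifs <;> omega
  have g2 : gF n 2 = 2 := by simp only [gF]; split_ifs <;> omega
  have g3 : gF n (n-1) = 3 := by simp only [gF]; split_ifs <;> omega
  have g4 : gF n n = 4 := by simp only [gF]; split_ifs <;> omega
  rcases sl0_cases hp with h|h|h|h|h|h|h|h <;> subst h <;>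
    simp [phiF, eF, g1, g2, g3, g4, Prod.mk.injEq]

theorem stmt3 (n : ℕ) (hn : 4 ≤ n) :
    ∃ i : SupBotHom D0 (Dn n),
      Function.Injective i ∧
      i ⊥ = ⊥ ∧
      i (A0 1 1) = aElt n 1 1 ∧
      i (A0 1 2) = aElt n 1 2 ∧
      i (A0 2 1) = aElt n 2 1 ∧
      i (A0 2 2) = aElt n 2 2 ∧
      i (A0 3 3) = aElt n (n - 1) (n - 1) ∧
      i (A0 3 4) = aElt n (n - 1) n ∧
      i (A0 4 3) = aElt n n (n - 1) ∧
      i (A0 4 4) = aElt n n n ∧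
      ∃ j : SupBotHom (Dn n) D0, ∀ x, j (i x) = x := by
  
  classical
  have fm : ∀ p : ↥SL0, (eF n p.1.1, eF n p.1.2) ∈ SL n := fmem n hn
  set f : ↥SL0 → ↥(SL n) := fun p => ⟨(eF n p.1.1, eF n p.1.2), fm p⟩ with hf
  set f' : ↥(SL n) → ↥SL0 := fun p => ⟨phiF n p.1, phimem n p.2⟩ with hf'
  have hcoords : ∀ p : ↥(SL n), p.1.1 ≤ n ∧ p.1.2 ≤ n := by
    rintro ⟨p, hp⟩
    have hp' : p ∈ Sset n := hp
    simp only [Sset, Set.mem_setOf_eq] at hp'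
    exact ⟨hp'.2.1, hp'.2.2.2.1⟩
  set I : SupBotHom D0 (Dn n) :=
    { toFun := WithBot.map f
      map_bot' := rfl
      map_sup' := by
        rintro (_|a) (_|b)
        · rfl
        · show WithBot.map f (⊥ ⊔ ↑b) = WithBot.map f ⊥ ⊔ WithBot.map f ↑b
          rw [bot_sup_eq, WithBot.map_bot, bot_sup_eq]
        · show WithBot.map f (↑a ⊔ ⊥) = WithBot.map f ↑a ⊔ WithBot.map f ⊥
          rw [sup_bot_eq, WithBot.map_bot, sup_bot_eq]
        · show WithBot.map f ↑(a ⊔ b) = WithBot.map f ↑a ⊔ WithBot.map f ↑b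
          simp only [WithBot.map_coe, ← WithBot.coe_sup, WithBot.coe_inj]
          apply Subtype.ext
          show ((a : ℕ×ℕ) ⊔ b).map (eF n) (eF n) = _
          have ha := sl0_bounds a.2
          have hb := sl0_bounds b.2
          simp only [Prod.sup_def, Prod.map]
          exact Prod.ext (emax n hn ha.1 hb.1) (emax n hn ha.2 hb.2) } with hI
  set J : SupBotHom (Dn n) D0 :=
    { toFun := WithBot.map f'
      map_bot' := rfl
      map_sup' := by
        rintro (_|a) (_|b)
        · rfl
        · show WithBot.map f' (⊥ ⊔ ↑b) = WithBot.map f' ⊥ ⊔ WithBot.map f' ↑b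
          rw [bot_sup_eq, WithBot.map_bot, bot_sup_eq]
        · show WithBot.map f' (↑a ⊔ ⊥) = WithBot.map f' ↑a ⊔ WithBot.map f' ⊥
          rw [sup_bot_eq, WithBot.map_bot, sup_bot_eq]
        · show WithBot.map f' ↑(a ⊔ b) = WithBot.map f' ↑a ⊔ WithBot.map f' ↑b
          simp only [WithBot.map_coe, ← WithBot.coe_sup, WithBot.coe_inj]
          apply Subtype.ext
          exact phisup n a.1 b.1 (hcoords a).1 (hcoords a).2 (hcoords b).1 (hcoords b).2 } with hJ
  have hJI : ∀ x, J (I x) = x := by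
    rintro (_|p)
    · rfl
    · show WithBot.map f' (WithBot.map f ↑p) = ↑p
      simp only [WithBot.map_coe, WithBot.coe_inj]
      exact Subtype.ext (phi_eF n hn p.2)
  have hIcoe : ∀ p : ↥SL0, I (↑p : D0) = ((f p : ↥(SL n)) : Dn n) := fun p => rfl
  refine ⟨I, ?_, rfl, ?_, ?_, ?_, ?_, ?_, ?_, ?_, ?_, J, hJI⟩
  · intro x y hxy
    have := congrArg J hxy
    rwa [hJI, hJI] at this
  all_goals {
    rw [A0, aElt]
    rw [dif_pos (mem_sl0 (by norm_num)), dif_pos (by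
      show _ ∈ Sset n
      simp only [Sset, Set.mem_setOf_eq]
      omega)]
    rw [hIcoe, WithBot.coe_inj]
    apply Subtype.ext
    show ((eF n _, eF n _) : ℕ × ℕ) = _
    simp only [eF]
    norm_num
  }
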